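/- Let R be a commutative ring with identity, S a multiplicative subset of R, n a positive integer, I an ideal of R with I ∩ S = ∅, and J an ideal of R with J ∩ S ≠ ∅. If I is an S-n-absorbing ideal of R, then the product ideal I·J is an S-n-absorbing ideal of R. -/

import Mathlib

/-- `I` is `S`-`n`-absorbing with associated element `s`: whenever a product of `n+1`
elements lies in `I`, multiplying the product with one factor omitted by `s` lands in `I`. -/
def IsSNAbsorbingAssoc {R : Type*} [CommRing R] (s : R) (n : ℕ) (I : Ideal R) : Prop :=
  ∀ r : Fin (n + 1) → R, (∏ i, r i) ∈ I →
    ∃ j : Fin (n + 1), s * ∏ i ∈ Finset.univ.erase j, r i ∈ I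

/-- `I` is an `S`-`n`-absorbing ideal. -/
def IsSNAbsorbing {R : Type*} [CommRing R] (S : Set R) (n : ℕ) (I : Ideal R) : Prop :=
  ∃ s ∈ S, IsSNAbsorbingAssoc s n I

theorem stmt_0 {R : Type*} [CommRing R] (S : Submonoid R) (n : ℕ) (hn : 0 < n)
    (I J : Ideal R) (hIS : Disjoint (I : Set R) (S : Set R))
    (hJS : ((J : Set R) ∩ (S : Set R)).Nonempty)
    (hI : IsSNAbsorbing (S : Set R) n I) :
    IsSNAbsorbing (S : Set R) n (I * J) := by
  obtain ⟨s, hsS, hs⟩ := hI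
  obtain ⟨t, htJ, htS⟩ := hJS
  refine ⟨s * t, mul_mem hsS htS, fun r hr => ?_⟩
  obtain ⟨j, hj⟩ := hs r (Ideal.mul_le_left hr)
  refine ⟨j, ?_⟩
  have : (s * ∏ i ∈ Finset.univ.erase j, r i) * t ∈ I * J := Ideal.mul_mem_mul hj htJ
  have heq : (s * t) * ∏ i ∈ Finset.univ.erase j, r i
      = (s * ∏ i ∈ Finset.univ.erase j, r i) * t := by ring
  rwa [heq]
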